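/- arXiv:2212.08762 — 2 statements merged into one kernel-verified Lean document; each statement's English description precedes it below -/
import Mathlib

section
/- Let X be a symmetric positive definite 3×3 real matrix with tr(X) = K > 0. Then tr(X⁻¹) - λ₋(X⁻¹) ≥ 6/K, with equality when all three eigenvalues of X equal K/3. -/
open Matrix


lemma aux_amhm {b c K : ℝ} (hb : 0 < b) (hc : 0 < c) (hK : 0 < K)
    (h : 3 * (b + c) ≤ 2 * K) : 6 / K ≤ b⁻¹ + c⁻¹ := by
  rw [inv_add_inv hb.ne' hc.ne', div_le_div_iff₀ hK (by positivity)]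
  nlinarith [sq_nonneg (b - c), mul_pos hb hc, add_pos hb hc]


/-- For a 3×3 symmetric positive definite `X` with `tr X = K > 0`,
`tr(X⁻¹) - λ₋(X⁻¹) ≥ 6/K`, with equality when all eigenvalues of `X` equal `K/3`. -/
theorem trace_inv_minus_min_eig_ge {X : Matrix (Fin 3) (Fin 3) ℝ}
    (hX : X.PosDef) (K : ℝ) (hK : 0 < K) (htr : X.trace = K) :
    6 / K ≤ (X⁻¹).trace - ⨅ i, hX.1.inv.eigenvalues i ∧
      ((∀ i, hX.1.eigenvalues i = K / 3) →
        (X⁻¹).trace - ⨅ i, hX.1.inv.eigenvalues i = 6 / K) := by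

  set μ : Fin 3 → ℝ := hX.1.eigenvalues with hμdef
  set ν : Fin 3 → ℝ := hX.1.inv.eigenvalues with hνdef
  have hμpos : ∀ i, 0 < μ i := hX.eigenvalues_pos
  have hspec : X = (hX.1.eigenvectorUnitary : Matrix (Fin 3) (Fin 3) ℝ) *
      diagonal μ * star (hX.1.eigenvectorUnitary : Matrix (Fin 3) (Fin 3) ℝ) := by
    have := hX.1.spectral_theorem
    simpa using this
  set U : Matrix (Fin 3) (Fin 3) ℝ := (hX.1.eigenvectorUnitary : Matrix (Fin 3) (Fin 3) ℝ) with hUdef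
  have hsU : star U * U = 1 := Matrix.UnitaryGroup.star_mul_self hX.1.eigenvectorUnitary
  have hUs : U * star U = 1 := mul_eq_one_comm.mp hsU
  have hXinv : X⁻¹ = U * diagonal (fun i => (μ i)⁻¹) * star U := by
    refine inv_eq_right_inv ?_
    rw [hspec]
    calc U * diagonal μ * star U * (U * diagonal (fun i => (μ i)⁻¹) * star U)
        = U * (diagonal μ * (star U * U) * diagonal (fun i => (μ i)⁻¹)) * star U := by
          noncomm_ring
      _ = 1 := by
          rw [hsU, mul_one, diagonal_mul_diagonal]
          have : (fun i => μ i * (μ i)⁻¹) = fun _ => (1:ℝ) := by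
            funext i; exact mul_inv_cancel₀ (hμpos i).ne'
          rw [this, diagonal_one, mul_one, hUs]
  have htrμ : ∑ i, μ i = K := by
    rw [← htr]
    conv_rhs => rw [hspec]
    rw [Matrix.trace_mul_comm, ← mul_assoc, hsU, one_mul, trace_diagonal]
  have htrinv : (X⁻¹).trace = ∑ i, (μ i)⁻¹ := by
    rw [hXinv, Matrix.trace_mul_comm, ← mul_assoc, hsU, one_mul, trace_diagonal]
  have hs1 : spectrum ℝ (X⁻¹) = Set.range fun i => (μ i)⁻¹ := by
    rw [hXinv]
    rw [hUdef, Unitary.spectrum_star_right_conjugate, spectrum_diagonal]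
  have hs2 : Set.range ν = Set.range fun i => (μ i)⁻¹ := by
    rw [← hs1]
    exact (Matrix.IsHermitian.spectrum_real_eq_range_eigenvalues (hA := hX.1.inv)).symm
  have hνrange : ∀ i, ∃ j, ν i = (μ j)⁻¹ := by
    intro i
    have : ν i ∈ Set.range fun i => (μ i)⁻¹ := hs2 ▸ Set.mem_range_self i
    obtain ⟨j, hj⟩ := this
    exact ⟨j, hj.symm⟩
  have hμrange : ∀ j, ∃ i, ν i = (μ j)⁻¹ := by
    intro j
    have : (μ j)⁻¹ ∈ Set.range ν := by
      rw [hs2]; exact Set.mem_range_self j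
    obtain ⟨i, hi⟩ := this
    exact ⟨i, hi⟩
  constructor
  · obtain ⟨i0, hi0⟩ := Finite.exists_max μ
    obtain ⟨j0, hj0⟩ := hμrange i0
    have hinf_le : (⨅ i, ν i) ≤ (μ i0)⁻¹ := hj0 ▸ ciInf_le (Finite.bddBelow_range ν) j0
    have key : 6 / K ≤ (∑ i, (μ i)⁻¹) - (μ i0)⁻¹ := by
      have ha := hμpos 0; have hb := hμpos 1; have hc := hμpos 2
      rw [Fin.sum_univ_three] at htrμ ⊢
      have hcases : i0 = 0 ∨ i0 = 1 ∨ i0 = 2 := by fin_cases i0 <;> simp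
      rcases hcases with h | h | h <;> subst h
      · have h2 := hi0 1; have h3 := hi0 2
        have := aux_amhm hb hc hK (by linarith)
        linarith
      · have h2 := hi0 0; have h3 := hi0 2
        have := aux_amhm ha hc hK (by linarith)
        linarith
      · have h2 := hi0 0; have h3 := hi0 1
        have := aux_amhm ha hb hK (by linarith)
        linarith
    calc 6 / K ≤ (∑ i, (μ i)⁻¹) - (μ i0)⁻¹ := key
      _ ≤ (X⁻¹).trace - ⨅ i, ν i := by rw [htrinv]; linarith
  · intro hall
    have hνconst : ∀ i, ν i = 3 / K := by
      intro i
      obtain ⟨j, hj⟩ := hνrange i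
      rw [hj, hall j, inv_div]
    have hinf : (⨅ i, ν i) = 3 / K := by
      rw [show ν = fun _ => 3 / K from funext hνconst]
      exact ciInf_const
    rw [htrinv, hinf]
    rw [Fin.sum_univ_three, hall 0, hall 1, hall 2, inv_div]
    field_simp
    ring
end

section
/- Let r₁,…,r_N ∈ ℝ³ with Σᵢ rᵢ = 0 and C = Σᵢ rᵢrᵢᵀ positive definite. Then tr(C⁻¹) - λ₋(C⁻¹) ≥ 6 / Σᵢ ‖rᵢ‖₂², and if ‖rᵢ‖₂ ≤ r_max for all i, then tr(C⁻¹) - λ₋(C⁻¹) ≥ 6/(N r_max²). -/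
open Matrix

lemma trace_conj_diag {n : Type*} [Fintype n] [DecidableEq n]
    (U : Matrix n n ℝ) (hU : U ∈ Matrix.unitaryGroup n ℝ) (d : n → ℝ) :
    (U * diagonal d * star U).trace = ∑ i, d i := by
  rw [Matrix.trace_mul_cycle, Matrix.mem_unitaryGroup_iff'.mp hU, Matrix.one_mul,
    Matrix.trace_diagonal]

lemma trace_eq_sum_eig {n : Type*} [Fintype n] [DecidableEq n]
    {A : Matrix n n ℝ} (hA : A.IsHermitian) : A.trace = ∑ i, hA.eigenvalues i := by
  conv_lhs => rw [hA.spectral_theorem, Unitary.conjStarAlgAut_apply]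
  rw [trace_conj_diag _ (hA.eigenvectorUnitary).2]
  simp [RCLike.ofReal_real_eq_id]

lemma trace_inv_eq {n : Type*} [Fintype n] [DecidableEq n]
    {A : Matrix n n ℝ} (hA : A.PosDef) (hH : (A⁻¹).IsHermitian)
    (hpos : ∀ i, hH.eigenvalues i ≠ 0) :
    A.trace = ∑ i, (hH.eigenvalues i)⁻¹ := by
  have hdet : IsUnit A.det := hA.det_pos.ne'.isUnit
  have hU := (hH.eigenvectorUnitary).2
  have h1 : (↑(hH.eigenvectorUnitary) : Matrix n n ℝ)⁻¹ = star ↑(hH.eigenvectorUnitary) :=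
    Matrix.inv_eq_left_inv (Matrix.mem_unitaryGroup_iff'.mp hU)
  have h2 : (star (↑(hH.eigenvectorUnitary) : Matrix n n ℝ))⁻¹ = ↑(hH.eigenvectorUnitary) :=
    Matrix.inv_eq_left_inv (Matrix.mem_unitaryGroup_iff.mp hU)
  have hD : (diagonal (RCLike.ofReal ∘ hH.eigenvalues) : Matrix n n ℝ)⁻¹
      = diagonal (fun i => (hH.eigenvalues i)⁻¹) := by
    apply Matrix.inv_eq_right_inv
    rw [Matrix.diagonal_mul_diagonal]
    simp only [RCLike.ofReal_real_eq_id, Function.comp, id_eq]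
    rw [show (fun i => hH.eigenvalues i * (hH.eigenvalues i)⁻¹) = fun _ => (1 : ℝ) from
      funext fun i => mul_inv_cancel₀ (hpos i), Matrix.diagonal_one]
  conv_lhs => rw [← Matrix.nonsing_inv_nonsing_inv A hdet, hH.spectral_theorem, Unitary.conjStarAlgAut_apply]
  rw [Matrix.mul_inv_rev, Matrix.mul_inv_rev, h1, h2, hD,
    ← Matrix.mul_assoc, trace_conj_diag _ hU]

lemma key_ineq (a b c K : ℝ) (ha : 0 < a) (hb : 0 < b) (hc : 0 < c)
    (hca : c ≤ a) (hcb : c ≤ b) (hKdef : K = a⁻¹ + b⁻¹ + c⁻¹) : 6 / K ≤ a + b := by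
  have hK : 0 < K := by rw [hKdef]; positivity
  rw [div_le_iff₀ hK, hKdef]
  have e1 : a * a⁻¹ = 1 := mul_inv_cancel₀ ha.ne'
  have e2 : b * b⁻¹ = 1 := mul_inv_cancel₀ hb.ne'
  have e3 : c * c⁻¹ = 1 := mul_inv_cancel₀ hc.ne'
  nlinarith [mul_nonneg (mul_nonneg (sq_nonneg (a - b)) (inv_pos.2 ha).le) (inv_pos.2 hb).le,
    mul_nonneg (sub_nonneg.2 hca) (inv_pos.2 hc).le,
    mul_nonneg (sub_nonneg.2 hcb) (inv_pos.2 hc).le]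

/-- Lower bounds on the squared minimax 3D RNDOP: for centroid-zero anchors `rᵢ` with
`C = Σᵢ rᵢrᵢᵀ ≻ 0`, `tr(C⁻¹) - λ₋(C⁻¹) ≥ 6/Σᵢ‖rᵢ‖²`, and if `‖rᵢ‖ ≤ r_max` for all
`i` then also `tr(C⁻¹) - λ₋(C⁻¹) ≥ 6/(N r_max²)`. -/
theorem rndop_universal_lower_bounds {N : ℕ} (r : Fin N → Fin 3 → ℝ)
    (hsum : ∑ i, r i = 0)
    (C : Matrix (Fin 3) (Fin 3) ℝ) (hCdef : C = ∑ i, vecMulVec (r i) (r i))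
    (hC : C.PosDef) :
    6 / (∑ i, r i ⬝ᵥ r i) ≤ (C⁻¹).trace - ⨅ i, hC.1.inv.eigenvalues i ∧
      ∀ rmax : ℝ, 0 < rmax → (∀ i, r i ⬝ᵥ r i ≤ rmax ^ 2) →
        6 / ((N : ℝ) * rmax ^ 2) ≤ (C⁻¹).trace - ⨅ i, hC.1.inv.eigenvalues i := by
  have hH : (C⁻¹).IsHermitian := hC.1.inv
  set ν : Fin 3 → ℝ := hH.eigenvalues with hν
  have hpos : ∀ i, 0 < ν i := fun i => hC.inv.eigenvalues_pos i
  have htrC : C.trace = ∑ i, r i ⬝ᵥ r i := by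
    rw [hCdef, Matrix.trace_sum]
    refine Finset.sum_congr rfl fun i _ => ?_
    simp [Matrix.trace, Matrix.diag, vecMulVec_apply, dotProduct]
  have hK : C.trace = ∑ i, (ν i)⁻¹ := trace_inv_eq hC hH (fun i => (hpos i).ne')
  have htr : (C⁻¹).trace = ∑ i, ν i := trace_eq_sum_eig hH
  have hSK : (∑ i, r i ⬝ᵥ r i) = ∑ i, (ν i)⁻¹ := htrC.symm.trans hK
  have hSpos : 0 < ∑ i, r i ⬝ᵥ r i := by
    rw [hSK]
    exact Finset.sum_pos (fun i _ => inv_pos.2 (hpos i)) Finset.univ_nonempty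
  obtain ⟨j, hj⟩ := Finite.exists_min ν
  have hinf : ⨅ i, ν i = ν j :=
    le_antisymm (ciInf_le (Finite.bddBelow_range ν) j) (le_ciInf hj)
  have main : 6 / (∑ i, r i ⬝ᵥ r i) ≤ (C⁻¹).trace - ⨅ i, ν i := by
    rw [htr, hinf, hSK]
    fin_cases j <;>
      simp only [Fin.sum_univ_three, Fin.mk_zero, Fin.mk_one, Fin.isValue,
        show (⟨2, by norm_num⟩ : Fin 3) = 2 from rfl] at hj ⊢
    · have h := key_ineq (ν 1) (ν 2) (ν 0) ((ν 0)⁻¹ + (ν 1)⁻¹ + (ν 2)⁻¹)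
        (hpos 1) (hpos 2) (hpos 0) (hj 1) (hj 2) (by ring)
      linarith
    · have h := key_ineq (ν 0) (ν 2) (ν 1) ((ν 0)⁻¹ + (ν 1)⁻¹ + (ν 2)⁻¹)
        (hpos 0) (hpos 2) (hpos 1) (hj 0) (hj 2) (by ring)
      linarith
    · have h := key_ineq (ν 0) (ν 1) (ν 2) ((ν 0)⁻¹ + (ν 1)⁻¹ + (ν 2)⁻¹)
        (hpos 0) (hpos 1) (hpos 2) (hj 0) (hj 1) (by ring)
      linarith
  refine ⟨main, fun rmax hrm hle => ?_⟩
  have hS : (∑ i, r i ⬝ᵥ r i) ≤ (N : ℝ) * rmax ^ 2 := by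
    calc (∑ i, r i ⬝ᵥ r i) ≤ ∑ _i : Fin N, rmax ^ 2 :=
          Finset.sum_le_sum fun i _ => hle i
      _ = (N : ℝ) * rmax ^ 2 := by simp [mul_comm]
  have h2 : 6 / ((N : ℝ) * rmax ^ 2) ≤ 6 / (∑ i, r i ⬝ᵥ r i) := by
    gcongr
  linarith
end
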